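/- Under the hypotheses (i)–(vi) of the inverse-sequence setup (data n_i, P_i ⊂ I^{n_i}, δ_i, ε_i, g_i^{i+1} : P_{i+1} → P_i, with X = ∩_{i=1}^∞ P_i × Q_{n_i}, Z = lim (P_i, g_i^{i+1}), and π : Z → X the limit map π(z) = lim_{i→∞} a_i for a thread z = (a_i)), fix x ∈ X, let B_{x,i} = N̄(p_{n_i}(x), 2δ_i) ∩ P_i and B^#_{x,i} = N̄(p_{n_i}(x), ε_i) ∩ P_i, and set P_x = (B_{x,i}, g_i^{i+1}) and P_x^# = (B^#_{x,i}, g_i^{i+1}). Then (d) lim P_x = lim P_x^#, and (e) π^{-1}(x) = lim P_x. -/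

import Mathlib

open Set Topology Filter

noncomputable section

/-! ### The Hilbert cube `Q = ∏_{i=1}^∞ I` realized inside `ℕ → ℝ` -/

/-- The ambient space `ℝ^∞` containing the Hilbert cube. -/
abbrev ESp : Type := ℕ → ℝ

/-- The metric `ρ(x, y) = ∑_{i=1}^∞ |x_i - y_i| / 2^i` on the Hilbert cube. -/
noncomputable def rho (x y : ESp) : ℝ := ∑' i : ℕ, |x i - y i| / 2 ^ (i + 1)

/-- The coordinate projection `p_n : Q → I^n` (followed by the identification of
`I^n` with the slice `I^n × {0} ⊆ Q`). -/
def proj (n : ℕ) (x : ESp) : ESp := fun j => if j < n then x j else 0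

/-- The Hilbert cube `Q`. -/
def HCube : Set ESp := {x | ∀ i, x i ∈ Set.Icc (0 : ℝ) 1}

/-- The slice `I^n × {0} ⊆ Q`, the canonical copy of `I^n` in `Q`. -/
def cubeSlice (n : ℕ) : Set ESp := {x ∈ HCube | ∀ j, n ≤ j → x j = 0}

/-- `P × Q_n ⊆ Q = I^n × Q_n`, for a subset `P` of the slice `I^n × {0}`. -/
def tube (P : Set ESp) (n : ℕ) : Set ESp := {x ∈ HCube | proj n x ∈ P}

/-- The data and hypotheses (i)–(vi) of the inverse-sequence setup of Lemma 3.1. -/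
structure InvSeqSetup where
  n : ℕ → ℕ
  P : ℕ → Set ESp
  δ : ℕ → ℝ
  ε : ℕ → ℝ
  /-- the bonding maps `g_i^{i+1} : P_{i+1} → P_i` -/
  g : ℕ → ESp → ESp
  P_sub : ∀ i, P i ⊆ cubeSlice (n i)
  P_cpt : ∀ i, IsCompact (P i)
  δ_pos : ∀ i, 0 < δ i
  ε_pos : ∀ i, 0 < ε i
  g_maps : ∀ i, Set.MapsTo (g i) (P (i + 1)) (P i)
  g_cont : ∀ i, ContinuousOn (g i) (P (i + 1))
  /-- (i) -/
  hyp1 : ∀ i, ∀ u ∈ HCube, ∀ v ∈ HCube,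
    rho u v ≤ ε (i + 1) → rho (proj (n i) u) (proj (n i) v) < δ i
  /-- (ii) -/
  hyp2 : ∀ i, n i < n (i + 1)
  /-- (iii) -/
  hyp3 : ∀ i, 9 / 2 ^ n i < ε i
  /-- (iv) -/
  hyp4 : ∀ i, ∀ x ∈ P (i + 1), rho (g i x) (proj (n i) x) < δ i
  /-- (v) -/
  hyp5 : ∀ i, δ i < 1 / 2 ^ (n i - 1)
  /-- (vi) -/
  hyp6 : ∀ i, tube (P (i + 1)) (n (i + 1)) ⊆ tube (P i) (n i)

namespace InvSeqSetup

/-- `X = ∩_{i=1}^∞ P_i × Q_{n_i}`. -/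
def X (S : InvSeqSetup) : Set ESp := ⋂ i, tube (S.P i) (S.n i)

/-- `Z = lim (P_i, g_i^{i+1})`: the space of threads of the inverse sequence. -/
abbrev Thread (S : InvSeqSetup) : Type :=
  {a : ℕ → ESp // (∀ i, a i ∈ S.P i) ∧ ∀ i, S.g i (a (i + 1)) = a i}

/-- `π : Z → X` is the limit map, `π(z) = lim_{i→∞} a_i` for a thread `z = (a_i)`. -/
def IsLimitMap (S : InvSeqSetup) (π : S.Thread → ESp) : Prop :=
  ∀ z : S.Thread, Filter.Tendsto (fun i => rho (z.1 i) (π z)) Filter.atTop (nhds 0)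

/-- `B_{x,i} = N̄(p_{n_i}(x), 2δ_i) ∩ P_i`. -/
def B (S : InvSeqSetup) (x : ESp) (i : ℕ) : Set ESp :=
  {y ∈ cubeSlice (S.n i) | rho y (proj (S.n i) x) ≤ 2 * S.δ i} ∩ S.P i

/-- `B^#_{x,i} = N̄(p_{n_i}(x), ε_i) ∩ P_i`. -/
def Bs (S : InvSeqSetup) (x : ESp) (i : ℕ) : Set ESp :=
  {y ∈ cubeSlice (S.n i) | rho y (proj (S.n i) x) ≤ S.ε i} ∩ S.P i

end InvSeqSetup

end



set_option maxHeartbeats 1000000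

section RhoAux

lemma rhoAux.summable_geom : Summable (fun i : ℕ => (1/2:ℝ) ^ (i+1)) := by
  have hc : Summable ((fun i : ℕ => (1/2:ℝ)^i) ∘ (fun i : ℕ => i + 1)) :=
    summable_geometric_two.comp_injective (fun a b hab => by omega)
  exact hc

lemma rhoAux.tsum_geom : ∑' i : ℕ, (1/2:ℝ) ^ (i+1) = 1 := by
  have h : ∑' i : ℕ, (1/2:ℝ) ^ (i+1) = ∑' i : ℕ, (1/2:ℝ) ^ i * (1/2) := by
    simp [pow_succ]
  rw [h, tsum_mul_right, tsum_geometric_two]; norm_num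

lemma rhoAux.abs_le_one {u v : ESp} (hu : u ∈ HCube) (hv : v ∈ HCube) (i : ℕ) :
    |u i - v i| ≤ 1 := by
  have h1 := hu i; have h2 := hv i
  rw [abs_sub_le_iff]
  constructor <;> linarith [h1.1, h1.2, h2.1, h2.2]

lemma rhoAux.term_le {u v : ESp} (hu : u ∈ HCube) (hv : v ∈ HCube) (i : ℕ) :
    |u i - v i| / 2 ^ (i+1) ≤ (1/2:ℝ)^(i+1) := by
  have h := rhoAux.abs_le_one hu hv i
  have h2 : (1/2:ℝ)^(i+1) = 1 / 2^(i+1) := by rw [div_pow, one_pow]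
  rw [h2]
  gcongr

lemma rhoAux.summable {u v : ESp} (hu : u ∈ HCube) (hv : v ∈ HCube) :
    Summable (fun i : ℕ => |u i - v i| / 2 ^ (i + 1)) :=
  Summable.of_nonneg_of_le (fun i => by positivity) (rhoAux.term_le hu hv)
    rhoAux.summable_geom

lemma rho_nonneg (u v : ESp) : 0 ≤ rho u v :=
  tsum_nonneg (fun i => by positivity)

lemma rho_self (u : ESp) : rho u u = 0 := by simp [rho]

lemma rho_symm (u v : ESp) : rho u v = rho v u := by
  unfold rho
  congr 1; funext i; rw [abs_sub_comm]

lemma rho_triangle {u v w : ESp} (hu : u ∈ HCube) (hv : v ∈ HCube) (hw : w ∈ HCube) :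
    rho u w ≤ rho u v + rho v w := by
  unfold rho
  rw [← Summable.tsum_add (rhoAux.summable hu hv) (rhoAux.summable hv hw)]
  refine Summable.tsum_le_tsum (fun i => ?_) (rhoAux.summable hu hw)
    ((rhoAux.summable hu hv).add (rhoAux.summable hv hw))
  rw [← add_div]
  gcongr
  exact abs_sub_le (u i) (v i) (w i)

lemma rho_eq_zero {u v : ESp} (hu : u ∈ HCube) (hv : v ∈ HCube) (h : rho u v = 0) :
    u = v := by
  funext i
  have hle := Summable.le_tsum (rhoAux.summable hu hv) i (fun j _ => by positivity)
  unfold rho at h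
  rw [h] at hle
  have hge : (0:ℝ) ≤ |u i - v i| / 2 ^ (i + 1) := by positivity
  have h0 : |u i - v i| / 2 ^ (i + 1) = 0 := le_antisymm hle hge
  rcases div_eq_zero_iff.mp h0 with h3 | h3
  · exact sub_eq_zero.mp (abs_eq_zero.mp h3)
  · exfalso
    have : (0:ℝ) < 2 ^ (i+1) := by positivity
    linarith

lemma proj_mem_HCube {u : ESp} (hu : u ∈ HCube) (n : ℕ) : proj n u ∈ HCube := by
  intro i
  unfold proj
  split
  · exact hu i
  · exact ⟨le_rfl, zero_le_one⟩

lemma proj_mem_cubeSlice {u : ESp} (hu : u ∈ HCube) (n : ℕ) : proj n u ∈ cubeSlice n :=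
  ⟨proj_mem_HCube hu n, fun j hj => by simp [proj, Nat.not_lt.mpr hj]⟩

lemma proj_eq_self {u : ESp} {n : ℕ} (hu : u ∈ cubeSlice n) : proj n u = u := by
  funext j
  by_cases hj : j < n
  · simp [proj, hj]
  · simp [proj, hj, (hu.2 j (Nat.le_of_not_lt hj)).symm]

lemma proj_proj {m n : ℕ} (h : m ≤ n) (u : ESp) : proj m (proj n u) = proj m u := by
  funext j
  unfold proj
  by_cases hj : j < m
  · simp [hj, lt_of_lt_of_le hj h]
  · simp [hj]

lemma rho_proj_le {u v : ESp} (hu : u ∈ HCube) (hv : v ∈ HCube) (n : ℕ) :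
    rho (proj n u) (proj n v) ≤ rho u v := by
  refine Summable.tsum_le_tsum (fun i => ?_)
    (rhoAux.summable (proj_mem_HCube hu n) (proj_mem_HCube hv n)) (rhoAux.summable hu hv)
  have hnum : |proj n u i - proj n v i| ≤ |u i - v i| := by
    unfold proj
    split
    · exact le_rfl
    · simp
  gcongr

lemma rhoAux.tsum_tail (n : ℕ) :
    ∑' i : ℕ, (if i < n then (0:ℝ) else (1/2:ℝ) ^ (i+1)) = (1/2:ℝ) ^ n := by
  have hf : Summable (fun i : ℕ => if i < n then (0:ℝ) else (1/2:ℝ) ^ (i+1)) := by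
    refine Summable.of_nonneg_of_le (fun i => ?_) (fun i => ?_) rhoAux.summable_geom
    · split <;> positivity
    · split
      · positivity
      · exact le_rfl
  have hsum := Summable.sum_add_tsum_nat_add (f := fun i : ℕ => if i < n then (0:ℝ) else (1/2:ℝ) ^ (i+1)) n hf
  have h1 : ∑ i ∈ Finset.range n, (if i < n then (0:ℝ) else (1/2:ℝ) ^ (i+1)) = 0 := by
    apply Finset.sum_eq_zero
    intro i hi
    simp [Finset.mem_range.mp hi]
  have h2 : ∑' i : ℕ, (if i + n < n then (0:ℝ) else (1/2:ℝ) ^ (i+n+1)) = (1/2:ℝ) ^ n := by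
    have he : ∀ i : ℕ, (if i + n < n then (0:ℝ) else (1/2:ℝ) ^ (i+n+1))
        = (1/2:ℝ) ^ (i+1) * (1/2:ℝ) ^ n := by
      intro i
      rw [if_neg (by omega), ← pow_add]
      congr 1
      omega
    rw [tsum_congr he, tsum_mul_right, rhoAux.tsum_geom, one_mul]
  rw [← hsum, h1, zero_add]
  exact h2

lemma rho_proj_self {u : ESp} (hu : u ∈ HCube) (n : ℕ) :
    rho (proj n u) u ≤ 1 / 2 ^ n := by
  have h2 : (1/2:ℝ)^n = 1 / 2^n := by rw [div_pow, one_pow]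
  rw [← h2, ← rhoAux.tsum_tail n]
  refine Summable.tsum_le_tsum (fun i => ?_) (rhoAux.summable (proj_mem_HCube hu n) hu) ?_
  · unfold proj
    split
    · simp
    · have hui := hu i
      have hle : |0 - u i| ≤ 1 := by
        rw [zero_sub, abs_neg, abs_of_nonneg hui.1]; exact hui.2
      calc |0 - u i| / 2 ^ (i+1) ≤ 1 / 2 ^ (i+1) := by gcongr
        _ = (1/2:ℝ)^(i+1) := by rw [div_pow, one_pow]
  · refine Summable.of_nonneg_of_le (fun i => ?_) (fun i => ?_) rhoAux.summable_geom
    · split <;> positivity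
    · split
      · positivity
      · exact le_rfl

end RhoAux

/-- Lemma 3.1 (d), (e): for `x ∈ X`,
`lim P_x = lim P_x^#` and `π⁻¹(x) = lim P_x`, where `P_x = (B_{x,i}, g_i^{i+1})` and
`P_x^# = (B^#_{x,i}, g_i^{i+1})` are the induced inverse sequences. -/
theorem statement4 (S : InvSeqSetup) (π : S.Thread → ESp) (hπ : S.IsLimitMap π)
    (hπX : ∀ z : S.Thread, π z ∈ S.X) (hπc : Continuous π)
    (x : ESp) (hx : x ∈ S.X) :
    {z : S.Thread | ∀ i, z.1 i ∈ S.B x i} = {z : S.Thread | ∀ i, z.1 i ∈ S.Bs x i} ∧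
    {z : S.Thread | π z = x} = {z : S.Thread | ∀ i, z.1 i ∈ S.B x i} := by
  classical
  have hxtube : ∀ i, x ∈ tube (S.P i) (S.n i) := fun i => Set.mem_iInter.mp hx i
  have hxQ : x ∈ HCube := (hxtube 0).1
  have hnmono : Monotone S.n := (strictMono_nat_of_lt_succ S.hyp2).monotone
  have hnge : ∀ j, j ≤ S.n j := fun j => (strictMono_nat_of_lt_succ S.hyp2).le_apply
  have hPQ : ∀ i, ∀ y ∈ S.P i, y ∈ HCube := fun i y hy => (S.P_sub i hy).1
  have hδle : ∀ i, S.δ i ≤ 2 / 2 ^ S.n i := by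
    intro i
    have h := S.hyp5 i
    have h2 : (1:ℝ) / 2 ^ (S.n i - 1) ≤ 2 / 2 ^ S.n i := by
      rw [div_le_div_iff₀ (by positivity) (by positivity)]
      have hle : (2:ℝ) ^ S.n i ≤ 2 * 2 ^ (S.n i - 1) := by
        rcases Nat.eq_zero_or_pos (S.n i) with h0 | h0
        · rw [h0]; norm_num
        · have hco : S.n i - 1 + 1 = S.n i := Nat.succ_pred_eq_of_pos h0
          calc (2:ℝ) ^ S.n i = 2 ^ (S.n i - 1 + 1) := by rw [hco]
            _ = 2 * 2 ^ (S.n i - 1) := by rw [pow_succ]; ring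
            _ ≤ 2 * 2 ^ (S.n i - 1) := le_rfl
      linarith
    linarith
  have hεgt : ∀ i, 9 / 2 ^ S.n i < S.ε i := S.hyp3
  -- part (d)
  have hd : {z : S.Thread | ∀ i, z.1 i ∈ S.B x i} = {z : S.Thread | ∀ i, z.1 i ∈ S.Bs x i} := by
    ext z
    simp only [Set.mem_setOf_eq]
    constructor
    · intro h i
      obtain ⟨⟨hs, hr⟩, hp⟩ := h i
      refine ⟨⟨hs, hr.trans ?_⟩, hp⟩
      have h1 := hδle i
      have h2 := hεgt i
      have e1 : (4:ℝ) / 2 ^ S.n i = 2 * (2 / 2 ^ S.n i) := by ring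
      have e2 : (4:ℝ) / 2 ^ S.n i ≤ 9 / 2 ^ S.n i := by gcongr <;> norm_num
      linarith
    · intro h i
      have hz1 : z.1 (i+1) ∈ S.P (i+1) := z.2.1 (i+1)
      have hzQ : z.1 (i+1) ∈ HCube := hPQ _ _ hz1
      have h1 : rho (z.1 i) (proj (S.n i) (z.1 (i+1))) < S.δ i := by
        have hh := S.hyp4 i (z.1 (i+1)) hz1
        rw [z.2.2 i] at hh
        exact hh
      have hBs := h (i+1)
      have h2 : rho (proj (S.n i) (z.1 (i+1))) (proj (S.n i) x) < S.δ i := by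
        have happ := S.hyp1 i (z.1 (i+1)) hzQ (proj (S.n (i+1)) x)
          (proj_mem_HCube hxQ _) hBs.1.2
        rwa [proj_proj (hnmono (Nat.le_succ i)) x] at happ
      refine ⟨⟨S.P_sub i (z.2.1 i), ?_⟩, z.2.1 i⟩
      have htri : rho (z.1 i) (proj (S.n i) x) ≤
          rho (z.1 i) (proj (S.n i) (z.1 (i+1)))
            + rho (proj (S.n i) (z.1 (i+1))) (proj (S.n i) x) :=
        rho_triangle (hPQ _ _ (z.2.1 i)) (proj_mem_HCube hzQ _) (proj_mem_HCube hxQ _)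
      linarith
  refine ⟨hd, ?_⟩
  -- telescoping bound, valid for any thread
  have key : ∀ z : S.Thread, ∀ j J : ℕ, j ≤ J →
      rho (z.1 j) (proj (S.n j) (z.1 J)) ≤ 4 / 2 ^ S.n j - 4 / 2 ^ S.n J := by
    intro z j
    refine Nat.le_induction ?_ ?_
    · rw [proj_eq_self (S.P_sub j (z.2.1 j)), rho_self]
      simp
    · intro J hJ ih
      have hnj : S.n j ≤ S.n J := hnmono hJ
      have hz1 : z.1 (J+1) ∈ S.P (J+1) := z.2.1 (J+1)
      have hzQ : z.1 (J+1) ∈ HCube := hPQ _ _ hz1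
      have hzJQ : z.1 J ∈ HCube := hPQ _ _ (z.2.1 J)
      have h1 : rho (z.1 J) (proj (S.n J) (z.1 (J+1))) < S.δ J := by
        have hh := S.hyp4 J (z.1 (J+1)) hz1
        rw [z.2.2 J] at hh
        exact hh
      have h2 : rho (proj (S.n j) (z.1 J)) (proj (S.n j) (z.1 (J+1))) ≤ S.δ J := by
        have hlip := rho_proj_le hzJQ (proj_mem_HCube hzQ (S.n J)) (S.n j)
        rw [proj_proj hnj (z.1 (J+1))] at hlip
        exact hlip.trans h1.le
      have htri : rho (z.1 j) (proj (S.n j) (z.1 (J+1))) ≤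
          rho (z.1 j) (proj (S.n j) (z.1 J))
            + rho (proj (S.n j) (z.1 J)) (proj (S.n j) (z.1 (J+1))) :=
        rho_triangle (hPQ _ _ (z.2.1 j)) (proj_mem_HCube hzJQ _) (proj_mem_HCube hzQ _)
      have hδJ := hδle J
      have hstep : (2:ℝ) * 2 ^ S.n J ≤ 2 ^ S.n (J+1) := by
        have hn1 : S.n J + 1 ≤ S.n (J+1) := S.hyp2 J
        calc (2:ℝ) * 2 ^ S.n J = 2 ^ (S.n J + 1) := by rw [pow_succ]; ring
          _ ≤ 2 ^ S.n (J+1) := by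
              apply pow_le_pow_right₀ (by norm_num) hn1
      have hp1 : (0:ℝ) < 2 ^ S.n J := by positivity
      have hp2 : (0:ℝ) < 2 ^ S.n (J+1) := by positivity
      have hfrac : (4:ℝ) / 2 ^ S.n (J+1) ≤ 2 / 2 ^ S.n J := by
        rw [div_le_div_iff₀ hp2 hp1]
        nlinarith
      have e3 : (4:ℝ) / 2 ^ S.n J = 2 * (2 / 2 ^ S.n J) := by ring
      linarith
  -- π⁻¹(x) ⊆ lim P_x^#
  have hsub1 : ∀ z : S.Thread, π z = x → ∀ j, z.1 j ∈ S.Bs x j := by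
    intro z hz j
    have ht := hπ z
    rw [hz] at ht
    have hev : ∀ᶠ J in Filter.atTop, rho (z.1 J) x < S.ε (j+1) :=
      ht.eventually (gt_mem_nhds (S.ε_pos (j+1)))
    obtain ⟨J, hJrho, hJge⟩ := (hev.and (Filter.eventually_ge_atTop j)).exists
    have hzJQ : z.1 J ∈ HCube := hPQ _ _ (z.2.1 J)
    have happ : rho (proj (S.n j) (z.1 J)) (proj (S.n j) x) < S.δ j :=
      S.hyp1 j (z.1 J) hzJQ x hxQ hJrho.le
    have hkey := key z j J hJge
    have htri : rho (z.1 j) (proj (S.n j) x) ≤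
        rho (z.1 j) (proj (S.n j) (z.1 J)) + rho (proj (S.n j) (z.1 J)) (proj (S.n j) x) :=
      rho_triangle (hPQ _ _ (z.2.1 j)) (proj_mem_HCube hzJQ _) (proj_mem_HCube hxQ _)
    have hδj := hδle j
    have hεj := hεgt j
    have h4 : (0:ℝ) < 4 / 2 ^ S.n J := by positivity
    have e1 : (6:ℝ) / 2 ^ S.n j = 4 / 2 ^ S.n j + 2 / 2 ^ S.n j := by ring
    have e2 : (6:ℝ) / 2 ^ S.n j ≤ 9 / 2 ^ S.n j := by gcongr <;> norm_num
    refine ⟨⟨S.P_sub j (z.2.1 j), ?_⟩, z.2.1 j⟩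
    linarith
  -- lim P_x ⊆ π⁻¹(x)
  have hsub2 : ∀ z : S.Thread, (∀ i, z.1 i ∈ S.B x i) → π z = x := by
    intro z hz
    have hπQ : π z ∈ HCube := ((Set.mem_iInter.mp (hπX z)) 0).1
    have hbound : ∀ i, rho (z.1 i) x ≤ 5 * (1/2 : ℝ) ^ i := by
      intro i
      have hziQ : z.1 i ∈ HCube := hPQ _ _ (z.2.1 i)
      have h1 : rho (z.1 i) (proj (S.n i) x) ≤ 2 * S.δ i := (hz i).1.2
      have h2 : rho (proj (S.n i) x) x ≤ 1 / 2 ^ S.n i := rho_proj_self hxQ (S.n i)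
      have htri : rho (z.1 i) x ≤ rho (z.1 i) (proj (S.n i) x) + rho (proj (S.n i) x) x :=
        rho_triangle hziQ (proj_mem_HCube hxQ _) hxQ
      have hδi := hδle i
      have hpow : (2:ℝ) ^ i ≤ 2 ^ S.n i := pow_le_pow_right₀ (by norm_num) (hnge i)
      have h5 : (5:ℝ) / 2 ^ S.n i ≤ 5 * (1/2:ℝ) ^ i := by
        have hh : (5:ℝ) * (1/2:ℝ)^i = 5 / 2 ^ i := by
          rw [div_pow, one_pow, mul_one_div]
        rw [hh]
        gcongr
      have e1 : (4:ℝ) / 2 ^ S.n i = 2 * (2 / 2 ^ S.n i) := by ring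
      have e2 : (5:ℝ) / 2 ^ S.n i = 4 / 2 ^ S.n i + 1 / 2 ^ S.n i := by ring
      linarith
    have h2 : Filter.Tendsto (fun i : ℕ => 5 * (1/2:ℝ)^i) Filter.atTop (nhds 0) := by
      have hp := tendsto_pow_atTop_nhds_zero_of_lt_one
        (by norm_num : (0:ℝ) ≤ 1/2) (by norm_num : (1/2:ℝ) < 1)
      simpa using hp.const_mul 5
    have htend : Filter.Tendsto (fun i : ℕ => rho (z.1 i) (π z) + 5 * (1/2:ℝ)^i)
        Filter.atTop (nhds 0) := by
      simpa using (hπ z).add h2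
    have hle : rho (π z) x ≤ 0 := by
      refine ge_of_tendsto' htend (fun i => ?_)
      have htri : rho (π z) x ≤ rho (π z) (z.1 i) + rho (z.1 i) x :=
        rho_triangle hπQ (hPQ _ _ (z.2.1 i)) hxQ
      rw [rho_symm (π z) (z.1 i)] at htri
      linarith [hbound i]
    exact rho_eq_zero hπQ hxQ (le_antisymm hle (rho_nonneg _ _))
  ext z
  simp only [Set.mem_setOf_eq]
  constructor
  · intro h
    have hBs : z ∈ {z : S.Thread | ∀ i, z.1 i ∈ S.Bs x i} := hsub1 z h
    rw [← hd] at hBs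
    exact hBs
  · intro h
    exact hsub2 z h
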